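/- Let ℒ be a nonempty class of countable linear orders downward closed under embeddability. Then ⊴^ℒ is transitive (on all linear orders) if and only if ℒ is closed under convex sums. -/

import Mathlib

universe u v w x

/-- A `K`-convex partition of `L`: a partition of `L` into nonempty pieces indexed by `K`
such that `k < k'` iff every element of `P k` is below every element of `P k'`. -/
def IsConvexPartition {K : Type u} {L : Type v} [LinearOrder K] [LinearOrder L]
    (P : K → Set L) : Prop :=
  (∀ k, (P k).Nonempty) ∧ (∀ y : L, ∃! k, y ∈ P k) ∧
    ∀ k k' : K, k < k' ↔ ∀ a ∈ P k, ∀ b ∈ P k', a < b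

/-- `ℒ`-convex embeddability: `L ⊴^ℒ L'` iff there are `K ∈ ℒ`, a `K`-convex partition of `L`,
and an order embedding of `L` into `L'` mapping each piece onto a convex set. -/
def LCE (ℒ : Set LinOrd.{u}) (L : Type v) (L' : Type w)
    [LinearOrder L] [LinearOrder L'] : Prop :=
  ∃ K ∈ ℒ, ∃ P : ↥K → Set L, IsConvexPartition P ∧
    ∃ f : L ↪o L', ∀ k : ↥K, (⇑f '' P k).OrdConnected

/-- `ℒ` is closed under convex sums (ccs). -/
def CCS (ℒ : Set LinOrd.{u}) : Prop :=
  ∀ K ∈ ℒ, ∀ K' ∈ ℒ, ∀ P : ↥K → Set ↥K',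
    (∀ k, (P k).Nonempty) → (∀ k, (P k).OrdConnected) →
    (∀ k₀ k₁ : ↥K, k₀ < k₁ → ∀ a ∈ P k₀, ∀ b ∈ P k₁, a ≤ b) →
    ∃ M ∈ ℒ, Nonempty (Lex ((k : ↥K) × ↥(P k)) ≃o ↥M)

open Set

lemma order_iff_of_forward' {K : Type u} {L : Type v} [LinearOrder K] [LinearOrder L]
    {P : K → Set L} (hne : ∀ k, (P k).Nonempty)
    (hfwd : ∀ k k' : K, k < k' → ∀ a ∈ P k, ∀ b ∈ P k', a < b) :
    ∀ k k' : K, k < k' ↔ ∀ a ∈ P k, ∀ b ∈ P k', a < b := by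
  intro k k'
  refine ⟨hfwd k k', fun h => ?_⟩
  rcases lt_trichotomy k k' with hlt | heq | hgt
  · exact hlt
  · obtain ⟨a, ha⟩ := hne k
    exact absurd (h a ha a (heq ▸ ha)) (lt_irrefl a)
  · obtain ⟨a, ha⟩ := hne k
    obtain ⟨b, hb⟩ := hne k'
    exact absurd (h a ha b hb) (not_lt.2 (hfwd k' k hgt b hb a ha).le)

/-- `ULift` as an order iso. -/
def oULift (α : Type u) [LinearOrder α] : ULift.{v} α ≃o α :=
  ⟨Equiv.ulift, Iff.rfl⟩

lemma lce_congr {A : Type u} {B : Type v} {A' : Type w} {B' : Type x}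
    [LinearOrder A] [LinearOrder B] [LinearOrder A'] [LinearOrder B']
    {ℒ : Set LinOrd.{0}} (eA : A ≃o A') (eB : B ≃o B') (h : LCE ℒ A B) : LCE ℒ A' B' := by
  obtain ⟨Kj, hK, P, ⟨h1, h2, h3⟩, f, hf⟩ := h
  refine ⟨Kj, hK, fun k => ⇑eA '' P k, ⟨?_, ?_, ?_⟩,
    (eA.symm.toOrderEmbedding.trans f).trans eB.toOrderEmbedding, ?_⟩
  · exact fun k => ((h1 k).image _)
  · intro y
    obtain ⟨k, hk, hkuniq⟩ := h2 (eA.symm y)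
    refine ⟨k, ⟨eA.symm y, hk, eA.apply_symm_apply y⟩, ?_⟩
    rintro k' ⟨z, hz, rfl⟩
    exact hkuniq k' (by rwa [eA.symm_apply_apply])
  · refine order_iff_of_forward' (fun k => (h1 k).image _) ?_
    rintro k k' hkk' a ⟨za, hza, rfl⟩ b ⟨zb, hzb, rfl⟩
    exact eA.lt_iff_lt.2 ((h3 k k').1 hkk' za hza zb hzb)
  · intro k
    refine ⟨?_⟩
    rintro z₀ ⟨a₀, ⟨w₀, hw₀, rfl⟩, rfl⟩ z₁ ⟨a₁, ⟨w₁, hw₁, rfl⟩, rfl⟩ z hz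
    have happ : ∀ a : A, ((eA.symm.toOrderEmbedding.trans f).trans eB.toOrderEmbedding) (eA a)
        = eB (f a) := by
      intro a
      simp [RelEmbedding.trans_apply, OrderIso.coe_toOrderEmbedding]
    rw [happ w₀, happ w₁] at hz
    have hz' : eB.symm z ∈ Icc (f w₀) (f w₁) := by
      constructor
      · rw [← eB.symm_apply_apply (f w₀)]; exact eB.symm.le_iff_le.2 hz.1
      · rw [← eB.symm_apply_apply (f w₁)]; exact eB.symm.le_iff_le.2 hz.2
    obtain ⟨x, hx, hfx⟩ := (hf k).out ⟨w₀, hw₀, rfl⟩ ⟨w₁, hw₁, rfl⟩ hz'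
    refine ⟨eA x, ⟨x, hx, rfl⟩, ?_⟩
    rw [happ x, hfx, eB.apply_symm_apply]


namespace SLexHelp
variable {ι : Type u} [LinearOrder ι] {α : ι → Type v} [∀ i, LinearOrder (α i)]

lemma lt_left {i j : ι} (a : α i) (b : α j) (h : i < j) :
    (toLex (⟨i, a⟩ : Sigma α) : Lex (Sigma α)) < toLex ⟨j, b⟩ :=
  Sigma.Lex.lt_def.2 (Or.inl h)

lemma lt_right {i : ι} {a b : α i} (h : a < b) :
    (toLex (⟨i, a⟩ : Sigma α) : Lex (Sigma α)) < toLex ⟨i, b⟩ :=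
  Sigma.Lex.lt_def.2 (Or.inr ⟨rfl, h⟩)

lemma le_fst_le {i j : ι} {a : α i} {b : α j}
    (h : (toLex (⟨i, a⟩ : Sigma α) : Lex (Sigma α)) ≤ toLex ⟨j, b⟩) : i ≤ j := by
  rcases Sigma.Lex.le_def.1 h with h1 | ⟨heq, -⟩
  · exact le_of_lt h1
  · exact le_of_eq heq

lemma le_same (i : ι) {a b : α i}
    (h : (toLex (⟨i, a⟩ : Sigma α) : Lex (Sigma α)) ≤ toLex ⟨i, b⟩) : a ≤ b := by
  rcases Sigma.Lex.le_def.1 h with h1 | ⟨heq, h2⟩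
  · exact absurd h1 (lt_irrefl i)
  · rwa [Subsingleton.elim heq rfl] at h2

lemma lt_diag_cases {i j : ι} {a : α i} {b : α j}
    (h : (toLex (⟨i, a⟩ : Sigma α) : Lex (Sigma α)) < toLex ⟨j, b⟩) :
    i < j ∨ ∃ h : i = j, ∀ (c : α j), HEq a c → c < b := by
  rcases Sigma.Lex.lt_def.1 h with h1 | ⟨heq, h2⟩
  · exact Or.inl h1
  · refine Or.inr ⟨heq, ?_⟩
    have hj : i = j := heq
    subst hj
    intro c hc
    rw [← eq_of_heq hc]
    rwa [Subsingleton.elim heq rfl] at h2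

end SLexHelp

noncomputable section Constr
open Classical

variable (K K' : LinOrd.{0}) (P : ↥K → Set ↥K')

/-- upper bound marker: 0 if the piece is a singleton, 1 otherwise -/
def cK (k : ↥K) : ℝ := if (P k).Subsingleton then 0 else 1

lemma cK_nonneg (k : ↥K) : 0 ≤ cK K K' P k := by
  unfold cK; split <;> norm_num

lemma cK_le_self (k : ↥K) : cK K K' P k ≤ cK K K' P k := le_rfl

/-- the fiber over `k` in `L₂`. -/
def DD (k : ↥K) : Set (Lex (↥(P k) × ℝ)) :=
  {p | (IsMin (ofLex p).1 → 0 ≤ (ofLex p).2) ∧ (IsMax (ofLex p).1 → (ofLex p).2 ≤ cK K K' P k)}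

abbrev LL := Lex ((k : ↥K) × ↥(P k))
abbrev LL₂ := Lex ((k : ↥K) × ↥(DD K K' P k))
abbrev LL₃ := Lex (↥K × Lex (↥K' × ℝ))

/-- `x` is shared upward at `k`. -/
def SU (k : ↥K) (x : ↥K') : Prop := ∃ k', k < k' ∧ x ∈ P k'

def rho (k : ↥K) (x : ↥(P k)) : ℝ := if SU K K' P k ↑x then cK K K' P k else 0

lemma rho_mem_DD (k : ↥K) (x : ↥(P k)) : toLex (x, rho K K' P k x) ∈ DD K K' P k := by
  unfold DD rho
  refine ⟨fun _ => ?_, fun _ => ?_⟩ <;> split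
  · exact cK_nonneg K K' P k
  · exact le_rfl
  · exact le_rfl
  · exact cK_nonneg K K' P k

/-- the embedding of `L` into `L₂`. -/
def ee : LL K K' P → LL₂ K K' P := fun p =>
  toLex ⟨(ofLex p).1, ⟨toLex ((ofLex p).2, rho K K' P (ofLex p).1 (ofLex p).2),
    rho_mem_DD K K' P (ofLex p).1 (ofLex p).2⟩⟩

lemma ee_strictMono : StrictMono (ee K K' P) := by
  have key : ∀ (a b : (k : ↥K) × ↥(P k)), (toLex a : LL K K' P) < toLex b →
      ee K K' P (toLex a) < ee K K' P (toLex b) := by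
    rintro ⟨k, z⟩ ⟨k', z'⟩ h
    rcases SLexHelp.lt_diag_cases h with h1 | ⟨heq, h2⟩
    · exact SLexHelp.lt_left _ _ h1
    · subst heq
      have hz : z < z' := h2 z HEq.rfl
      refine SLexHelp.lt_right ?_
      refine Subtype.mk_lt_mk.2 ?_
      exact Prod.Lex.lt_iff.2 (Or.inl hz)
  exact fun p q h => key (ofLex p) (ofLex q) h

/-- the embedding of `L₂` into `L₃`. -/
def hh : LL₂ K K' P → LL₃ K K' := fun p =>
  toLex ((ofLex p).1,
    toLex ((↑(ofLex (↑((ofLex p).2) : Lex (↥(P (ofLex p).1) × ℝ))).1 : ↥K'),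
      (ofLex (↑((ofLex p).2) : Lex (↥(P (ofLex p).1) × ℝ))).2))

lemma hh_strictMono : StrictMono (hh K K' P) := by
  have key : ∀ (a b : (k : ↥K) × ↥(DD K K' P k)), (toLex a : LL₂ K K' P) < toLex b →
      hh K K' P (toLex a) < hh K K' P (toLex b) := by
    rintro ⟨k, d⟩ ⟨k', d'⟩ h
    rcases SLexHelp.lt_diag_cases h with h1 | ⟨heq, h2⟩
    · exact Prod.Lex.lt_iff.2 (Or.inl h1)
    · subst heq
      have hd : (↑d : Lex (↥(P k) × ℝ)) < ↑d' := Subtype.coe_lt_coe.2 (h2 d HEq.rfl)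
      refine Prod.Lex.lt_iff.2 (Or.inr ⟨rfl, ?_⟩)
      rcases Prod.Lex.lt_iff.1 hd with hx | ⟨hx, hr⟩
      · exact Prod.Lex.lt_iff.2 (Or.inl (Subtype.coe_lt_coe.2 hx))
      · exact Prod.Lex.lt_iff.2 (Or.inr ⟨congrArg Subtype.val hx, hr⟩)
  exact fun p q h => key (ofLex p) (ofLex q) h

end Constr

section Legs
open Classical
variable (ℒ : Set LinOrd.{0}) (K K' : LinOrd.{0}) (P : ↥K → Set ↥K')

lemma leg2 (hK : K ∈ ℒ)
    (hPne : ∀ k, (P k).Nonempty) (hPconv : ∀ k, (P k).OrdConnected) :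
    LCE ℒ (LL₂ K K' P) (LL₃ K K') := by
  refine ⟨K, hK, fun k => {p : LL₂ K K' P | (ofLex p).1 = k}, ⟨?_, ?_, ?_⟩,
    OrderEmbedding.ofStrictMono _ (hh_strictMono K K' P), ?_⟩
  · -- nonempty
    intro k
    obtain ⟨x, hx⟩ := hPne k
    refine ⟨toLex ⟨k, ⟨toLex (⟨x, hx⟩, 0), ⟨fun _ => le_rfl, fun _ => cK_nonneg K K' P k⟩⟩⟩, rfl⟩
  · exact fun p => ⟨(ofLex p).1, rfl, fun k hk => hk.symm⟩
  · refine order_iff_of_forward' (fun k => ?_) ?_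
    · obtain ⟨x, hx⟩ := hPne k
      exact ⟨toLex ⟨k, ⟨toLex (⟨x, hx⟩, 0), ⟨fun _ => le_rfl, fun _ => cK_nonneg K K' P k⟩⟩⟩, rfl⟩
    · intro k k' hkk' p hp q hq
      refine SLexHelp.lt_left (α := fun k => ↥(DD K K' P k)) (ofLex p).2 (ofLex q).2 ?_
      rw [show (ofLex p).1 = k from hp, show (ofLex q).1 = k' from hq]
      exact hkk'
  · -- images convex
    intro k
    have key : ∀ (j₀ : ↥K) (d₀ : ↥(DD K K' P j₀)) (j₁ : ↥K) (d₁ : ↥(DD K K' P j₁))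
        (j : ↥K) (y : ↥K') (s : ℝ), k = j₀ → k = j₁ →
        hh K K' P (toLex ⟨j₀, d₀⟩) ≤ toLex (j, toLex (y, s)) →
        toLex (j, toLex (y, s)) ≤ hh K K' P (toLex ⟨j₁, d₁⟩) →
        toLex (j, toLex (y, s)) ∈ hh K K' P '' {p : LL₂ K K' P | (ofLex p).1 = k} := by
      intro j₀ d₀ j₁ d₁ j y s h₀ h₁ hle₀ hle₁
      subst h₀
      subst h₁
      have hj₀ : (k : ↥K) ≤ j := by
        rcases Prod.Lex.le_iff.1 hle₀ with h | ⟨h, -⟩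
        · exact h.le
        · exact h.le
      have hj₁' : (j : ↥K) ≤ k := by
        rcases Prod.Lex.le_iff.1 hle₁ with h | ⟨h, -⟩
        · exact h.le
        · exact h.le
      have hjk : j = k := le_antisymm hj₁' hj₀
      subst hjk
      set x₀ : ↥(P j) := (ofLex (↑d₀ : Lex (↥(P j) × ℝ))).1 with hx₀def
      set r₀ : ℝ := (ofLex (↑d₀ : Lex (↥(P j) × ℝ))).2 with hr₀def
      set x₁ : ↥(P j) := (ofLex (↑d₁ : Lex (↥(P j) × ℝ))).1 with hx₁def
      set r₁ : ℝ := (ofLex (↑d₁ : Lex (↥(P j) × ℝ))).2 with hr₁def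
      have hin₀ : (toLex ((↑x₀ : ↥K'), r₀) : Lex (↥K' × ℝ)) ≤ toLex (y, s) := by
        rcases Prod.Lex.le_iff.1 hle₀ with h | ⟨-, h⟩
        · exact absurd h (lt_irrefl j)
        · exact h
      have hin₁ : (toLex (y, s) : Lex (↥K' × ℝ)) ≤ toLex ((↑x₁ : ↥K'), r₁) := by
        rcases Prod.Lex.le_iff.1 hle₁ with h | ⟨-, h⟩
        · exact absurd h (lt_irrefl j)
        · exact h
      have hyle₀ : (↑x₀ : ↥K') ≤ y := by
        rcases Prod.Lex.le_iff.1 hin₀ with h | ⟨h, -⟩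
        · exact h.le
        · exact h.le
      have hyle₁ : y ≤ (↑x₁ : ↥K') := by
        rcases Prod.Lex.le_iff.1 hin₁ with h | ⟨h, -⟩
        · exact h.le
        · exact h.le
      have hy : y ∈ P j := (hPconv j).out x₀.2 x₁.2 ⟨hyle₀, hyle₁⟩
      have hsD : toLex ((⟨y, hy⟩ : ↥(P j)), s) ∈ DD K K' P j := by
        constructor
        · intro hmin
          have hle : x₀ ≤ (⟨y, hy⟩ : ↥(P j)) := Subtype.coe_le_coe.1 hyle₀
          have hx₀y : x₀ = (⟨y, hy⟩ : ↥(P j)) := le_antisymm hle (hmin hle)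
          have hrs : r₀ ≤ s := by
            rcases Prod.Lex.le_iff.1 hin₀ with h | ⟨-, h⟩
            · rw [show (↑x₀ : ↥K') = y from congrArg Subtype.val hx₀y] at h
              exact absurd h (lt_irrefl y)
            · exact h
          have hminx₀ : IsMin x₀ := by rw [hx₀y]; exact hmin
          have h0 : 0 ≤ r₀ := d₀.2.1 hminx₀
          exact le_trans h0 hrs
        · intro hmax
          have hle : (⟨y, hy⟩ : ↥(P j)) ≤ x₁ := Subtype.coe_le_coe.1 hyle₁
          have hx₁y : x₁ = (⟨y, hy⟩ : ↥(P j)) := le_antisymm (hmax hle) hle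
          have hrs : s ≤ r₁ := by
            rcases Prod.Lex.le_iff.1 hin₁ with h | ⟨-, h⟩
            · rw [show (↑x₁ : ↥K') = y from congrArg Subtype.val hx₁y] at h
              exact absurd h (lt_irrefl y)
            · exact h
          have hmaxx₁ : IsMax x₁ := by rw [hx₁y]; exact hmax
          have h1 : r₁ ≤ cK K K' P j := d₁.2.2 hmaxx₁
          exact le_trans hrs h1
      exact ⟨toLex ⟨j, ⟨toLex ((⟨y, hy⟩ : ↥(P j)), s), hsD⟩⟩, rfl, rfl⟩
    refine ⟨?_⟩
    rintro u ⟨p, hp, rfl⟩ v ⟨q, hq, rfl⟩ z hz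
    exact key (ofLex p).1 (ofLex p).2 (ofLex q).1 (ofLex q).2
      (ofLex z).1 (ofLex (ofLex z).2).1 (ofLex (ofLex z).2).2 hp.symm hq.symm hz.1 hz.2

lemma leg1 (hK : K ∈ ℒ) (hK' : K' ∈ ℒ)
    (hdc : ∀ A ∈ ℒ, ∀ B : LinOrd.{0}, Nonempty ↥B → Countable ↥B →
      Nonempty (↥B ↪o ↥A) → B ∈ ℒ)
    (hKne : Nonempty ↥K) (hK'count : Countable ↥K')
    (hPne : ∀ k, (P k).Nonempty) (hPconv : ∀ k, (P k).OrdConnected)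
    (hPmono : ∀ k₀ k₁ : ↥K, k₀ < k₁ → ∀ a ∈ P k₀, ∀ b ∈ P k₁, a ≤ b) :
    LCE ℒ (LL K K' P) (LL₂ K K' P) := by
  classical
  set T : Set ↥K' := ⋃ k, P k with hT
  have hTne : Nonempty ↥T := by
    obtain ⟨k₀⟩ := hKne
    obtain ⟨x, hx⟩ := hPne k₀
    exact ⟨⟨x, Set.mem_iUnion.2 ⟨k₀, hx⟩⟩⟩
  have hTcount : Countable ↥T := inferInstance
  have hB : LinOrd.of ↥T ∈ ℒ :=
    hdc K' hK' (LinOrd.of ↥T) hTne hTcount ⟨OrderEmbedding.subtype _⟩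
  refine ⟨LinOrd.of ↥T, hB, fun t : ↥T => {p : LL K K' P | (↑((ofLex p).2) : ↥K') = ↑t},
    ⟨?_, ?_, ?_⟩, OrderEmbedding.ofStrictMono _ (ee_strictMono K K' P), ?_⟩
  · -- nonempty
    have H : ∀ t : ↥T, ({p : LL K K' P | (↑((ofLex p).2) : ↥K') = ↑t}).Nonempty := by
      intro t
      obtain ⟨k, hk⟩ := Set.mem_iUnion.1 t.2
      exact ⟨toLex ⟨k, ⟨↑t, hk⟩⟩, rfl⟩
    exact H
  · -- unique
    have H : ∀ p : LL K K' P, ∃! t : ↥T, p ∈ {p : LL K K' P | (↑((ofLex p).2) : ↥K') = ↑t} := by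
      intro p
      refine ⟨⟨↑((ofLex p).2), Set.mem_iUnion.2 ⟨(ofLex p).1, ((ofLex p).2).2⟩⟩, rfl, ?_⟩
      rintro t ht
      exact Subtype.ext ht.symm
    exact H
  · -- order
    have H : ∀ t t' : ↥T, t < t' ↔
        ∀ a ∈ {p : LL K K' P | (↑((ofLex p).2) : ↥K') = ↑t},
        ∀ b ∈ {p : LL K K' P | (↑((ofLex p).2) : ↥K') = ↑t'}, a < b := by
      refine order_iff_of_forward' ?_ ?_
      · intro t
        obtain ⟨k, hk⟩ := Set.mem_iUnion.1 t.2
        exact ⟨toLex ⟨k, ⟨↑t, hk⟩⟩, rfl⟩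
      · intro t t' htt
        have key : ∀ (k : ↥K) (x : ↥(P k)) (k' : ↥K) (x' : ↥(P k')),
            (↑x : ↥K') = ↑t → (↑x' : ↥K') = ↑t' →
            (toLex ⟨k, x⟩ : LL K K' P) < toLex ⟨k', x'⟩ := by
          intro k x k' x' hx hx'
          rcases lt_trichotomy k k' with hlt | heq | hgt
          · exact SLexHelp.lt_left _ _ hlt
          · subst heq
            refine SLexHelp.lt_right ?_
            refine Subtype.coe_lt_coe.1 ?_
            rw [hx, hx']
            exact Subtype.coe_lt_coe.2 htt
          · exfalso
            have := hPmono k' k hgt ↑x' x'.2 ↑x x.2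
            rw [hx, hx'] at this
            exact absurd (Subtype.coe_le_coe.2 this) (not_le.2 htt)
        intro a ha b hb
        exact key (ofLex a).1 (ofLex a).2 (ofLex b).1 (ofLex b).2 ha hb
    exact H
  · -- images convex
    have H : ∀ t : ↥T,
        (ee K K' P '' {p : LL K K' P | (↑((ofLex p).2) : ↥K') = ↑t}).OrdConnected := by
      intro t
      have key : ∀ (k₀ : ↥K) (x₀ : ↥(P k₀)) (k₁ : ↥K) (x₁ : ↥(P k₁)) (j : ↥K)
          (d : ↥(DD K K' P j)),
          (↑x₀ : ↥K') = ↑t → (↑x₁ : ↥K') = ↑t →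
          ee K K' P (toLex ⟨k₀, x₀⟩) ≤ toLex ⟨j, d⟩ →
          toLex ⟨j, d⟩ ≤ ee K K' P (toLex ⟨k₁, x₁⟩) →
          toLex ⟨j, d⟩ ∈ ee K K' P '' {p : LL K K' P | (↑((ofLex p).2) : ↥K') = ↑t} := by
        intro k₀ x₀ k₁ x₁ j d hx₀ hx₁ hle₀ hle₁
        have hk₀j : k₀ ≤ j := SLexHelp.le_fst_le hle₀
        have hjk₁ : j ≤ k₁ := SLexHelp.le_fst_le hle₁
        set y : ↥(P j) := (ofLex (↑d : Lex (↥(P j) × ℝ))).1 with hydef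
        set s : ℝ := (ofLex (↑d : Lex (↥(P j) × ℝ))).2 with hsdef
        rcases eq_or_lt_of_le hk₀j with heq₀ | hlt₀
        · -- j = k₀
          subst heq₀
          rcases eq_or_lt_of_le hjk₁ with heq₁ | hlt₁
          · -- k₀ = k₁ : endpoints in the same fiber
            subst heq₁
            have hxx : x₀ = x₁ := Subtype.coe_injective (hx₀.trans hx₁.symm)
            subst hxx
            have hw : toLex ⟨k₀, d⟩ = ee K K' P (toLex ⟨k₀, x₀⟩) := le_antisymm hle₁ hle₀
            exact ⟨toLex ⟨k₀, x₀⟩, hx₀, hw.symm⟩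
          · -- k₀ = j < k₁
            have hSU : SU K K' P k₀ ↑x₀ :=
              ⟨k₁, hlt₁, (show (↑x₀ : ↥K') = ↑x₁ from hx₀.trans hx₁.symm) ▸ x₁.2⟩
            have hmax : ∀ z ∈ P k₀, z ≤ (↑x₀ : ↥K') := by
              intro z hz
              have h1 := hPmono k₀ k₁ hlt₁ z hz ↑x₁ x₁.2
              rwa [hx₁, ← hx₀] at h1
            have hmaxx₀ : IsMax x₀ := fun b _ => Subtype.coe_le_coe.1 (hmax ↑b b.2)
            have h' : (⟨toLex (x₀, rho K K' P k₀ x₀), rho_mem_DD K K' P k₀ x₀⟩ :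
                ↥(DD K K' P k₀)) ≤ d :=
              SLexHelp.le_same (α := fun k => ↥(DD K K' P k)) k₀ hle₀
            have hle₀' : (toLex (x₀, rho K K' P k₀ x₀) : Lex (↥(P k₀) × ℝ)) ≤ toLex (y, s) := h'
            have hxy : x₀ = y ∧ rho K K' P k₀ x₀ ≤ s := by
              rcases Prod.Lex.le_iff.1 hle₀' with h | ⟨h, h2⟩
              · exact absurd h (not_lt.2 (Subtype.coe_le_coe.1 (hmax ↑y y.2)))
              · exact ⟨h, h2⟩
            have hrho : rho K K' P k₀ x₀ = cK K K' P k₀ := if_pos hSU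
            have hmaxy : IsMax y := hxy.1 ▸ hmaxx₀
            have hscK : s ≤ cK K K' P k₀ := d.2.2 hmaxy
            have hs : s = rho K K' P k₀ x₀ := le_antisymm (hrho ▸ hscK) hxy.2
            have hde : d = ⟨toLex (x₀, rho K K' P k₀ x₀), rho_mem_DD K K' P k₀ x₀⟩ := by
              refine Subtype.ext ?_
              show toLex (y, s) = toLex (x₀, rho K K' P k₀ x₀)
              rw [← hxy.1, hs]
            exact ⟨toLex ⟨k₀, x₀⟩, hx₀,
              (congrArg (fun dd => (toLex ⟨k₀, dd⟩ : LL₂ K K' P)) hde).symm⟩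
        · rcases eq_or_lt_of_le hjk₁ with heq₁ | hlt₁
          · -- k₀ < j = k₁
            subst heq₁
            have hmin : ∀ z ∈ P j, (↑x₁ : ↥K') ≤ z := by
              intro z hz
              have h1 := hPmono k₀ j hlt₀ ↑x₀ x₀.2 z hz
              rwa [hx₀, ← hx₁] at h1
            have hminx₁ : IsMin x₁ := fun b _ => Subtype.coe_le_coe.1 (hmin ↑b b.2)
            have h' : d ≤ (⟨toLex (x₁, rho K K' P j x₁), rho_mem_DD K K' P j x₁⟩ :
                ↥(DD K K' P j)) :=
              SLexHelp.le_same (α := fun k => ↥(DD K K' P k)) j hle₁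
            have hle₁' : (toLex (y, s) : Lex (↥(P j) × ℝ)) ≤ toLex (x₁, rho K K' P j x₁) := h'
            have hxy : y = x₁ ∧ s ≤ rho K K' P j x₁ := by
              rcases Prod.Lex.le_iff.1 hle₁' with h | ⟨h, h2⟩
              · exact absurd h (not_lt.2 (Subtype.coe_le_coe.1 (hmin ↑y y.2)))
              · exact ⟨h, h2⟩
            have hrho : rho K K' P j x₁ = 0 := by
              by_cases hSU' : SU K K' P j ↑x₁
              · obtain ⟨k₂, hk₂, hx₁k₂⟩ := hSU'
                have hsub : (P j).Subsingleton := by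
                  intro z hz z' hz'
                  have h1 : z ≤ (↑x₁ : ↥K') := hPmono j k₂ hk₂ z hz ↑x₁ hx₁k₂
                  have h2 : z' ≤ (↑x₁ : ↥K') := hPmono j k₂ hk₂ z' hz' ↑x₁ hx₁k₂
                  exact le_antisymm (h1.trans (hmin z' hz')) (h2.trans (hmin z hz))
                have hcK : cK K K' P j = 0 := if_pos hsub
                rw [rho, if_pos ⟨k₂, hk₂, hx₁k₂⟩, hcK]
              · rw [rho, if_neg hSU']
            have hminy : IsMin y := hxy.1 ▸ hminx₁
            have h0s : 0 ≤ s := d.2.1 hminy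
            have hs : s = rho K K' P j x₁ := le_antisymm hxy.2 (hrho ▸ h0s)
            have hde : d = ⟨toLex (x₁, rho K K' P j x₁), rho_mem_DD K K' P j x₁⟩ := by
              refine Subtype.ext ?_
              show toLex (y, s) = toLex (x₁, rho K K' P j x₁)
              rw [hxy.1, hs]
            exact ⟨toLex ⟨j, x₁⟩, hx₁,
              (congrArg (fun dd => (toLex ⟨j, dd⟩ : LL₂ K K' P)) hde).symm⟩
          · -- k₀ < j < k₁ : middle fiber
            have hallt : ∀ z ∈ P j, z = (↑t : ↥K') := by
              intro z hz
              have h1 : z ≤ (↑x₁ : ↥K') := hPmono j k₁ hlt₁ z hz ↑x₁ x₁.2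
              have h2 : (↑x₀ : ↥K') ≤ z := hPmono k₀ j hlt₀ ↑x₀ x₀.2 z hz
              rw [hx₁] at h1
              rw [hx₀] at h2
              exact le_antisymm h1 h2
            have hty : (↑y : ↥K') = ↑t := hallt ↑y y.2
            have hzy : ∀ b : ↥(P j), b = y :=
              fun b => Subtype.coe_injective ((hallt _ b.2).trans (hallt _ y.2).symm)
            have hsub : (P j).Subsingleton := by
              intro z hz z' hz'
              rw [hallt z hz, hallt z' hz']
            have hcK : cK K K' P j = 0 := if_pos hsub
            have hminy : IsMin y := fun b _ => le_of_eq (hzy b).symm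
            have hmaxy : IsMax y := fun b _ => le_of_eq (hzy b)
            have h0s : 0 ≤ s := d.2.1 hminy
            have hs0 : s = 0 := le_antisymm (hcK ▸ d.2.2 hmaxy) h0s
            have hrho : rho K K' P j y = 0 := by
              by_cases hSU' : SU K K' P j ↑y
              · rw [rho, if_pos hSU', hcK]
              · rw [rho, if_neg hSU']
            have hde : d = ⟨toLex (y, rho K K' P j y), rho_mem_DD K K' P j y⟩ := by
              refine Subtype.ext ?_
              show toLex (y, s) = toLex (y, rho K K' P j y)
              rw [hs0, hrho]
            exact ⟨toLex ⟨j, y⟩, hty,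
              (congrArg (fun dd => (toLex ⟨j, dd⟩ : LL₂ K K' P)) hde).symm⟩
      refine ⟨?_⟩
      rintro u ⟨p, hp, rfl⟩ v ⟨q, hq, rfl⟩ z hz
      exact key (ofLex p).1 (ofLex p).2 (ofLex q).1 (ofLex q).2 (ofLex z).1 (ofLex z).2
        hp hq hz.1 hz.2
    exact H
end Legs

section Forcing
open Classical
variable (K K' : LinOrd.{0}) (P : ↥K → Set ↥K')

lemma L3_Icc_not_countable (u v : LL₃ K K') (huv : u < v) : ¬ (Set.Icc u v).Countable := by
  set k : ↥K := (ofLex u).1 with hk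
  set x : ↥K' := (ofLex (ofLex u).2).1 with hx
  set r : ℝ := (ofLex (ofLex u).2).2 with hr
  set m : ℝ → LL₃ K K' := fun τ => toLex (k, toLex (x, τ)) with hm
  have hmu : ∀ τ, r ≤ τ → u ≤ m τ := by
    intro τ hτ
    refine Prod.Lex.le_iff.2 (Or.inr ⟨rfl, ?_⟩)
    exact Prod.Lex.le_iff.2 (Or.inr ⟨rfl, hτ⟩)
  have hgood : ∃ s', r < s' ∧ ∀ τ ∈ Set.Ioo r s', u ≤ m τ ∧ m τ ≤ v := by
    rcases Prod.Lex.lt_iff.1 huv with h1 | ⟨h1, h2⟩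
    · refine ⟨r + 1, by linarith, fun τ hτ => ⟨hmu τ hτ.1.le, ?_⟩⟩
      exact Prod.Lex.le_iff.2 (Or.inl h1)
    · rcases Prod.Lex.lt_iff.1 h2 with h3 | ⟨h3, h4⟩
      · refine ⟨r + 1, by linarith, fun τ hτ => ⟨hmu τ hτ.1.le, ?_⟩⟩
        exact Prod.Lex.le_iff.2 (Or.inr ⟨h1, Prod.Lex.le_iff.2 (Or.inl h3)⟩)
      · refine ⟨(ofLex (ofLex v).2).2, h4, fun τ hτ => ⟨hmu τ hτ.1.le, ?_⟩⟩
        exact Prod.Lex.le_iff.2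
          (Or.inr ⟨h1, Prod.Lex.le_iff.2 (Or.inr ⟨h3, hτ.2.le⟩)⟩)
  obtain ⟨s', hrs', hgood⟩ := hgood
  intro hcount
  have hminj : Function.Injective m := by
    intro a b hab
    exact congrArg (fun p => (ofLex (ofLex p).2).2) hab
  have himg : m '' Set.Ioo r s' ⊆ Set.Icc u v := by
    rintro - ⟨τ, hτ, rfl⟩
    exact ⟨(hgood τ hτ).1, (hgood τ hτ).2⟩
  have h1 : (m '' Set.Ioo r s').Countable := hcount.mono himg
  have h2 : (Set.Ioo r s').Countable :=
    (h1.preimage hminj).mono (Set.subset_preimage_image _ _)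
  have h3 := h2.le_aleph0
  rw [Cardinal.mk_Ioo_real hrs'] at h3
  exact absurd h3 (not_le.2 Cardinal.aleph0_lt_continuum)

lemma forcing (ℒ : Set LinOrd.{0}) (hKcount : Countable ↥K) (hK'count : Countable ↥K')
    (h : LCE ℒ (LL K K' P) (LL₃ K K')) : ∃ M ∈ ℒ, Nonempty (LL K K' P ≃o ↥M) := by
  obtain ⟨M, hM, Q, ⟨hQne, hQuniq, hQord⟩, g, hg⟩ := h
  haveI : Countable (LL K K' P) := inferInstanceAs (Countable ((k : ↥K) × ↥(P k)))
  have hsub : ∀ m, ∀ a ∈ Q m, ∀ b ∈ Q m, a < b → False := by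
    intro m a ha b hb hab
    have hIcc : Set.Icc (g a) (g b) ⊆ ⇑g '' Q m := (hg m).out ⟨a, ha, rfl⟩ ⟨b, hb, rfl⟩
    have hcnt : (⇑g '' Q m).Countable := (Set.to_countable _).image _
    exact L3_Icc_not_countable K K' (g a) (g b) (g.lt_iff_lt.2 hab) (hcnt.mono hIcc)
  have hsing : ∀ m, ∀ a ∈ Q m, ∀ b ∈ Q m, a = b := by
    intro m a ha b hb
    rcases lt_trichotomy a b with h | h | h
    · exact absurd (hsub m a ha b hb h) (fun hf => hf)
    · exact h
    · exact absurd (hsub m b hb a ha h) (fun hf => hf)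
  classical
  set ψ : LL K K' P → ↥M := fun y => (hQuniq y).choose with hψdef
  have hψ : ∀ y, y ∈ Q (ψ y) := fun y => (hQuniq y).choose_spec.1
  have hψu : ∀ y m, y ∈ Q m → m = ψ y := fun y m hm => (hQuniq y).choose_spec.2 m hm
  have hψmono : StrictMono ψ := by
    intro y y' hyy'
    refine (hQord (ψ y) (ψ y')).2 ?_
    intro a ha b hb
    rw [hsing _ a ha y (hψ y), hsing _ b hb y' (hψ y')]
    exact hyy'
  have hψsurj : Function.Surjective ψ := by
    intro m
    obtain ⟨a, ha⟩ := hQne m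
    exact ⟨a, (hψu a m ha).symm⟩
  exact ⟨M, hM, ⟨StrictMono.orderIsoOfSurjective ψ hψmono hψsurj⟩⟩
end Forcing

lemma ccs_trans (ℒ : Set LinOrd.{0}) (hccs : CCS ℒ)
    (L₁ : Type u) (L₂ : Type v) (L₃ : Type w)
    [LinearOrder L₁] [LinearOrder L₂] [LinearOrder L₃]
    (h12 : LCE ℒ L₁ L₂) (h23 : LCE ℒ L₂ L₃) : LCE ℒ L₁ L₃ := by
  obtain ⟨A, hA, P, ⟨hPne, hPuniq, hPord⟩, f, hf⟩ := h12
  obtain ⟨B, hB, P', ⟨hP'ne, hP'uniq, hP'ord⟩, g, hg⟩ := h23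
  set S : ↥A → Set ↥B := fun k => {b | (P' b ∩ (⇑f '' P k)).Nonempty} with hSdef
  have hSne : ∀ k, (S k).Nonempty := by
    intro k
    obtain ⟨x, hx⟩ := hPne k
    obtain ⟨b, hb, -⟩ := hP'uniq (f x)
    exact ⟨b, f x, hb, x, hx, rfl⟩
  have hSconv : ∀ k, (S k).OrdConnected := by
    intro k
    refine ⟨fun b₀ h₀ b₁ h₁ b hb => ?_⟩
    rcases hb.1.eq_or_lt with rfl | hb₀
    · exact h₀
    rcases hb.2.eq_or_lt with rfl | hb₁
    · exact h₁
    obtain ⟨y₀, hy₀P, hy₀f⟩ := h₀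
    obtain ⟨y₁, hy₁P, hy₁f⟩ := h₁
    obtain ⟨c, hc⟩ := hP'ne b
    have hc₀ : y₀ < c := (hP'ord b₀ b).1 hb₀ y₀ hy₀P c hc
    have hc₁ : c < y₁ := (hP'ord b b₁).1 hb₁ c hc y₁ hy₁P
    exact ⟨c, hc, (hf k).out hy₀f hy₁f ⟨hc₀.le, hc₁.le⟩⟩
  have hSmono : ∀ k₀ k₁ : ↥A, k₀ < k₁ → ∀ a ∈ S k₀, ∀ b ∈ S k₁, a ≤ b := by
    intro k₀ k₁ hk b₀ h₀ b₁ h₁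
    obtain ⟨y₀, hy₀P, x₀, hx₀, rfl⟩ := h₀
    obtain ⟨y₁, hy₁P, x₁, hx₁, rfl⟩ := h₁
    have hxy : f x₀ < f x₁ := f.lt_iff_lt.2 ((hPord k₀ k₁).1 hk x₀ hx₀ x₁ hx₁)
    by_contra hcon
    push_neg at hcon
    exact absurd ((hP'ord b₁ b₀).1 hcon (f x₁) hy₁P (f x₀) hy₀P) (not_lt.2 hxy.le)
  obtain ⟨M, hM, ⟨iso⟩⟩ := hccs A hA B hB S hSne hSconv hSmono
  classical
  refine ⟨M, hM, fun m => {x : L₁ | ∃ (k : ↥A) (b : ↥(S k)),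
      iso (toLex ⟨k, b⟩) = m ∧ x ∈ P k ∧ f x ∈ P' (↑b : ↥B)}, ⟨?_, ?_, ?_⟩,
      (f : L₁ ↪o L₂).trans g, ?_⟩
  · -- nonempty
    intro m
    have hm : iso (toLex ⟨(ofLex (iso.symm m)).1, (ofLex (iso.symm m)).2⟩) = m := by
      rw [Sigma.eta]
      exact iso.apply_symm_apply m
    obtain ⟨y, hyP, x, hx, rfl⟩ := ((ofLex (iso.symm m)).2 : ↥(S _)).2
    exact ⟨x, _, _, hm, hx, hyP⟩
  · -- unique
    intro x
    obtain ⟨k, hk, hkuniq⟩ := hPuniq x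
    obtain ⟨b, hb, hbuniq⟩ := hP'uniq (f x)
    have hbS : b ∈ S k := ⟨f x, hb, x, hk, rfl⟩
    refine ⟨iso (toLex ⟨k, ⟨b, hbS⟩⟩), ⟨k, ⟨b, hbS⟩, rfl, hk, hb⟩, ?_⟩
    rintro m ⟨k', b', hm, hk', hb'⟩
    obtain rfl : k' = k := hkuniq k' hk'
    obtain rfl : (↑b' : ↥B) = b := hbuniq _ hb'
    rw [← hm]
  · -- order condition
    refine order_iff_of_forward' ?_ ?_
    · intro m
      have hm : iso (toLex ⟨(ofLex (iso.symm m)).1, (ofLex (iso.symm m)).2⟩) = m := by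
        rw [Sigma.eta]; exact iso.apply_symm_apply m
      obtain ⟨y, hyP, x, hx, rfl⟩ := ((ofLex (iso.symm m)).2 : ↥(S _)).2
      exact ⟨x, _, _, hm, hx, hyP⟩
    · rintro m m' hmm x ⟨k, b, rfl, hxP, hxP'⟩ x' ⟨k', b', rfl, hx'P, hx'P'⟩
      have hlt : (toLex (⟨k, b⟩ : (k : ↥A) × ↥(S k)) : Lex ((k : ↥A) × ↥(S k)))
          < toLex ⟨k', b'⟩ := iso.lt_iff_lt.1 hmm
      rcases SLexHelp.lt_diag_cases hlt with h1 | ⟨heq, h2⟩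
      · exact (hPord k k').1 h1 x hxP x' hx'P
      · subst heq
        have hbb : (↑b : ↥B) < ↑b' := Subtype.coe_lt_coe.2 (h2 b HEq.rfl)
        exact f.lt_iff_lt.1 ((hP'ord _ _).1 hbb (f x) hxP' (f x') hx'P')
  · -- images are convex
    intro m
    refine ⟨?_⟩
    rintro z₀ ⟨x₀, ⟨k, b, hm, hx₀P, hx₀P'⟩, rfl⟩ z₁ ⟨x₁, ⟨k₁, b₁, hm₁, hx₁P, hx₁P'⟩, rfl⟩ z hz
    -- first identify the witnesses
    rw [← hm] at hm₁
    have hσ : (⟨k₁, b₁⟩ : (k : ↥A) × ↥(S k)) = ⟨k, b⟩ := iso.injective hm₁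
    obtain ⟨hk, hbheq⟩ := Sigma.mk.inj_iff.1 hσ
    subst hk
    have hb' : b₁ = b := eq_of_heq hbheq
    subst hb'
    have hzg : z ∈ ⇑g '' P' (↑b₁ : ↥B) := (hg ↑b₁).out ⟨f x₀, hx₀P', rfl⟩ ⟨f x₁, hx₁P', rfl⟩ hz
    obtain ⟨y, hyP', rfl⟩ := hzg
    have hy : y ∈ Icc (f x₀) (f x₁) := ⟨g.le_iff_le.1 hz.1, g.le_iff_le.1 hz.2⟩
    have hyf : y ∈ ⇑f '' P k₁ := (hf k₁).out ⟨x₀, hx₀P, rfl⟩ ⟨x₁, hx₁P, rfl⟩ hy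
    obtain ⟨x, hxP, rfl⟩ := hyf
    exact ⟨x, ⟨k₁, b₁, hm, hxP, hyP'⟩, rfl⟩

section Final
lemma trans_ccs (ℒ : Set LinOrd.{0})
    (hmem : ∀ A ∈ ℒ, Nonempty ↥A ∧ Countable ↥A)
    (hdc : ∀ A ∈ ℒ, ∀ B : LinOrd.{0}, Nonempty ↥B → Countable ↥B →
      Nonempty (↥B ↪o ↥A) → B ∈ ℒ)
    (htr : ∀ (L₁ : Type u) (L₂ : Type v) (L₃ : Type w)
        [LinearOrder L₁] [LinearOrder L₂] [LinearOrder L₃],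
        LCE ℒ L₁ L₂ → LCE ℒ L₂ L₃ → LCE ℒ L₁ L₃) : CCS ℒ := by
  intro K hK K' hK' P hPne hPconv hPmono
  have hKne : Nonempty ↥K := (hmem K hK).1
  have hKc : Countable ↥K := (hmem K hK).2
  have hK'c : Countable ↥K' := (hmem K' hK').2
  have h1 : LCE ℒ (LL K K' P) (LL₂ K K' P) :=
    leg1 ℒ K K' P hK hK' hdc hKne hK'c hPne hPconv hPmono
  have h2 : LCE ℒ (LL₂ K K' P) (LL₃ K K') := leg2 ℒ K K' P hK hPne hPconv
  have h1' : LCE ℒ (ULift.{u} (LL K K' P)) (ULift.{v} (LL₂ K K' P)) :=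
    lce_congr (oULift _).symm (oULift _).symm h1
  have h2' : LCE ℒ (ULift.{v} (LL₂ K K' P)) (ULift.{w} (LL₃ K K')) :=
    lce_congr (oULift _).symm (oULift _).symm h2
  have h3' := htr _ _ _ h1' h2'
  have h3 : LCE ℒ (LL K K' P) (LL₃ K K') := lce_congr (oULift _) (oULift _) h3'
  exact forcing K K' P ℒ hKc hK'c h3


/-- For a nonempty downward closed class `ℒ` of countable linear orders,
`⊴^ℒ` is transitive iff `ℒ` is closed under convex sums. -/
theorem stmt_5 (ℒ : Set LinOrd.{0}) (hne : ℒ.Nonempty)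
    (hmem : ∀ A ∈ ℒ, Nonempty ↥A ∧ Countable ↥A)
    (hdc : ∀ A ∈ ℒ, ∀ B : LinOrd.{0}, Nonempty ↥B → Countable ↥B →
      Nonempty (↥B ↪o ↥A) → B ∈ ℒ) :
    (∀ (L₁ : Type u) (L₂ : Type v) (L₃ : Type w)
        [LinearOrder L₁] [LinearOrder L₂] [LinearOrder L₃],
        LCE ℒ L₁ L₂ → LCE ℒ L₂ L₃ → LCE ℒ L₁ L₃) ↔ CCS ℒ := by
  constructor
  · intro htr
    exact trans_ccs.{u,v,w} ℒ hmem hdc htr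
  · intro hccs L₁ L₂ L₃ _ _ _ h12 h23
    exact ccs_trans ℒ hccs L₁ L₂ L₃ h12 h23

end Final
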